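/- arXiv:1511.04614 — 5 statements merged into one kernel-verified Lean document; each statement's English description precedes it below -/
import Mathlib

section
/- Every nondegenerate lattice over ℤ₂ is an orthogonal direct sum of 1-dimensional lattices and copies of the lattices with Gram matrices [[0,1],[1,0]] and [[2,1],[1,2]], each scaled by powers of 2. -/
open scoped Matrix


lemma norm2 : ‖(2 : ℚ_[2])‖ = 1/2 := by
  have := @Padic.norm_p 2 ⟨Nat.prime_two⟩
  simpa using this

lemma le_half_of_lt_one {x : ℚ_[2]} (h : ‖x‖ < 1) : ‖x‖ ≤ 1/2 := by
  have := (Padic.norm_le_pow_iff_norm_lt_pow_add_one x (-1)).2 (by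
    simpa using h)
  simpa using this

lemma norm_eq_one_of_close {x : ℚ_[2]} (h : ‖x - 1‖ < 1) : ‖x‖ = 1 := by
  have h1 : ‖(1:ℚ_[2])‖ = 1 := by simp
  have hne : ‖x - 1‖ ≠ ‖(1:ℚ_[2])‖ := by rw [h1]; exact ne_of_lt h
  have := Padic.add_eq_max_of_ne (p := 2) hne
  simp only [sub_add_cancel] at this
  rw [this, h1]
  exact max_eq_right h.le

lemma odd_sub_one' {x : ℚ_[2]} (hx : ‖x‖ = 1) : ‖x - 1‖ ≤ 1/2 := by
  set X : ℤ_[2] := ⟨x, hx.le⟩ with hX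
  have hXnorm : ‖X‖ = 1 := hx
  have hz : PadicInt.toZMod X ≠ 0 := by
    intro h0
    have : X ∈ IsLocalRing.maximalIdeal ℤ_[2] := by
      rw [← PadicInt.ker_toZMod, RingHom.mem_ker]; exact h0
    rw [IsLocalRing.mem_maximalIdeal, mem_nonunits_iff, PadicInt.not_isUnit_iff] at this
    rw [hXnorm] at this; exact lt_irrefl _ this
  have hz1 : PadicInt.toZMod X = 1 := by
    have : ∀ z : ZMod 2, z = 0 ∨ z = 1 := by decide
    rcases this (PadicInt.toZMod X) with h | h
    · exact absurd h hz
    · exact h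
  have hmem : X - 1 ∈ IsLocalRing.maximalIdeal ℤ_[2] := by
    rw [← PadicInt.ker_toZMod, RingHom.mem_ker, map_sub, hz1, map_one, sub_self]
  have hlt : ‖X - 1‖ < 1 := by
    rw [IsLocalRing.mem_maximalIdeal, mem_nonunits_iff, PadicInt.not_isUnit_iff] at hmem
    exact hmem
  have : ‖x - 1‖ = ‖X - 1‖ := by
    rw [PadicInt.norm_def]; push_cast; rfl
  rw [this]
  exact le_half_of_lt_one hlt

lemma sqrt_of_close (u : ℚ_[2]) (hu : ‖u - 1‖ ≤ 1/8) :
    ∃ s : ℚ_[2], s^2 = u ∧ ‖s - 1‖ ≤ 1/4 := by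
  have hu1 : ‖u‖ ≤ 1 := by
    calc ‖u‖ = ‖(u - 1) + 1‖ := by ring_nf
    _ ≤ max ‖u - 1‖ ‖(1:ℚ_[2])‖ := Padic.nonarchimedean _ _
    _ ≤ 1 := by
        apply max_le _ (by norm_num)
        linarith
  set U : ℤ_[2] := ⟨u, hu1⟩ with hU
  set F : Polynomial ℤ_[2] := Polynomial.X ^ 2 - Polynomial.C U with hF
  have heval : F.eval 1 = 1 - U := by simp [hF]
  have hderiv : F.derivative = Polynomial.C 2 * Polynomial.X := by
    simp [hF, Polynomial.derivative_pow]
  have hderiv1 : F.derivative.eval 1 = 2 := by simp [hderiv]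
  have hnormderiv : ‖F.derivative.eval (1:ℤ_[2])‖ = 1/2 := by
    rw [hderiv1]
    show ‖((2:ℤ_[2]) : ℚ_[2])‖ = 1/2
    push_cast
    exact norm2
  have hnorm : ‖F.eval 1‖ < ‖F.derivative.eval 1‖ ^ 2 := by
    rw [heval, hnormderiv]
    have : ‖(1 - U : ℤ_[2])‖ = ‖u - 1‖ := by
      rw [← norm_neg]
      have h2 : -(1 - U) = U - 1 := by ring
      rw [h2]
      show ‖((U - 1 : ℤ_[2]) : ℚ_[2])‖ = _
      push_cast
      rfl
    rw [this]
    calc ‖u - 1‖ ≤ 1/8 := hu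
    _ < (1/2)^2 := by norm_num
  obtain ⟨z, hz, hdist, -, -⟩ := hensels_lemma hnorm
  refine ⟨(z : ℚ_[2]), ?_, ?_⟩
  · have hq : z^2 = U := by
      have := hz
      simp [hF, sub_eq_zero] at this
      exact this
    calc (z:ℚ_[2])^2 = ((z^2 : ℤ_[2]) : ℚ_[2]) := by push_cast; ring
    _ = u := by rw [hq]
  · rw [Polynomial.coe_aeval_eq_eval, hnormderiv] at hdist
    have h18 : ‖z - 1‖ ≤ 1/4 := by
      have := (PadicInt.norm_le_pow_iff_norm_lt_pow_add_one (z - 1) (-2)).2 ?_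
      · calc ‖z-1‖ ≤ (2:ℝ)^(-2:ℤ) := this
        _ = 1/4 := by norm_num
      · calc ‖z-1‖ < 1/2 := hdist
        _ = (2:ℝ)^((-2:ℤ)+1) := by norm_num
    calc ‖(z:ℚ_[2]) - 1‖ = ‖((z - 1 : ℤ_[2]) : ℚ_[2])‖ := by push_cast; ring_nf
    _ ≤ 1/4 := h18

lemma block2_unit (α γ : ℚ_[2]) (hα : ‖α‖ ≤ 1/2) (hγ : ‖γ‖ ≤ 1/2) :
    ∃ Q : Matrix (Fin 2) (Fin 2) ℚ_[2], (∀ i j, ‖Q i j‖ ≤ 1) ∧ ‖Q.det‖ = 1 ∧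
      (Qᵀ * !![α,1;1,γ] * Q = !![0,1;1,0] ∨ Qᵀ * !![α,1;1,γ] * Q = !![2,1;1,2]) := by
  by_cases hsmall : ‖α*γ‖ ≤ 1/8
  · -- hyperbolic case
    obtain ⟨s, hs, hs1⟩ := sqrt_of_close (1 - α*γ) (by
      have h : (1 - α*γ) - 1 = -(α*γ) := by ring
      rw [h, norm_neg]; exact hsmall)
    have hsn : ‖s‖ = 1 := norm_eq_one_of_close (lt_of_le_of_lt hs1 (by norm_num))
    have hs0 : s ≠ 0 := by intro h; rw [h] at hsn; simp at hsn
    have h1s : ‖1 + s‖ = 1/2 := by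
      have h2 : (1:ℚ_[2]) + s = (s - 1) + 2 := by ring
      rw [h2, Padic.add_eq_max_of_ne (by rw [norm2]; intro h; rw [h] at hs1; norm_num at hs1)]
      rw [norm2]
      exact max_eq_right (by linarith)
    have h1s0 : (1:ℚ_[2]) + s ≠ 0 := by
      intro h; rw [h, norm_zero] at h1s; norm_num at h1s
    have hm1s0 : (-1 - s : ℚ_[2]) ≠ 0 := by
      intro h
      apply h1s0
      linear_combination -h
    obtain ⟨t, ht, hαt, htn⟩ : ∃ t : ℚ_[2], t*(1+s) = -γ ∧ α*t = s-1 ∧ ‖t‖ ≤ 1 := by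
      refine ⟨γ/(-1-s), ?_, ?_, ?_⟩
      · field_simp
        ring
      · field_simp
        linear_combination hs
      · have hm : ‖(-1 - s : ℚ_[2])‖ = 1/2 := by
          rw [show (-1 - s : ℚ_[2]) = -(1+s) by ring, norm_neg, h1s]
        rw [norm_div, hm]
        rw [div_le_one (by norm_num)]
        linarith
    obtain ⟨c, hc, hcn⟩ : ∃ c : ℚ_[2], c*(2*s^2) = -α ∧ ‖c‖ ≤ 1 := by
      refine ⟨-α/(2*s^2), ?_, ?_⟩
      · field_simp
      · rw [norm_div, norm_neg, norm_mul, norm2, norm_pow, hsn]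
        rw [one_pow, mul_one, div_le_one (by norm_num)]
        linarith
    obtain ⟨si, hsi, hsin⟩ : ∃ si : ℚ_[2], si*s = 1 ∧ ‖si‖ = 1 := by
      refine ⟨s⁻¹, inv_mul_cancel₀ hs0, ?_⟩
      rw [norm_inv, hsn]; norm_num
    have hsum : ‖si + c*t‖ ≤ 1 := by
      calc ‖si + c*t‖ ≤ max ‖si‖ ‖c*t‖ := Padic.nonarchimedean _ _
      _ ≤ 1 := by
          apply max_le (le_of_eq hsin)
          rw [norm_mul]
          nlinarith [norm_nonneg c, norm_nonneg t]
    have hQT : (!![si + c*t, t; c, 1])ᵀ = !![si + c*t, c; t, 1] := by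
      ext i j; fin_cases i <;> fin_cases j <;> rfl
    refine ⟨!![si + c*t, t; c, 1], ?_, ?_, Or.inl ?_⟩
    · intro i j
      fin_cases i <;> fin_cases j <;> simp <;>
        first | exact hsum | exact htn | exact hcn | norm_num
    · have h : (!![si + c*t, t; c, 1]).det = si := by
        rw [Matrix.det_fin_two_of]; ring
      rw [h, hsin]
    · rw [hQT]
      ext i j
      fin_cases i <;> fin_cases j <;>
        simp [Matrix.mul_apply, Fin.sum_univ_two]
      · linear_combination (c^2*t + 2*si*c)*hαt + c^2*ht + si^2*hc - 2*c*s*si*hsi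
      · linear_combination (si + c*t)*hαt + hsi + c*ht
      · linear_combination (si + c*t)*hαt + hsi + c*ht
      · linear_combination t*hαt + ht
  · -- anisotropic case
    have hαγ4 : ‖α*γ‖ = 1/4 := by
      have hle : ‖α*γ‖ ≤ 1/4 := by
        rw [norm_mul]; nlinarith [norm_nonneg α, norm_nonneg γ]
      have hge : ¬ (‖α*γ‖ < 1/4) := by
        intro hlt
        apply hsmall
        have := (Padic.norm_le_pow_iff_norm_lt_pow_add_one (α*γ) (-3)).2 (by
          push_cast
          norm_num
          convert hlt using 2
          norm_num)
        calc ‖α*γ‖ ≤ (2:ℝ)^(-3:ℤ) := by exact_mod_cast this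
        _ = 1/8 := by norm_num
      linarith [lt_or_ge (‖α*γ‖) (1/4), hle]
    have hα2 : ‖α‖ = 1/2 := by
      rw [norm_mul] at hαγ4
      nlinarith [norm_nonneg α, norm_nonneg γ]
    have hγ2 : ‖γ‖ = 1/2 := by
      rw [norm_mul] at hαγ4
      nlinarith [norm_nonneg α, norm_nonneg γ]
    have hα0 : α ≠ 0 := by
      intro h; rw [h, norm_zero] at hα2; norm_num at hα2
    have hγm2 : ‖γ - 2‖ ≤ 1/4 := by
      have h1 : ‖γ/2‖ = 1 := by rw [norm_div, norm2, hγ2]; norm_num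
      have h2 := odd_sub_one' h1
      have h3 : γ - 2 = 2*(γ/2 - 1) := by ring
      rw [h3, norm_mul, norm2]; linarith
    obtain ⟨s, hs, hs1⟩ := sqrt_of_close (1 - α*(γ-2)) (by
      have h : (1 - α*(γ-2)) - 1 = -(α*(γ-2)) := by ring
      rw [h, norm_neg, norm_mul, hα2]
      nlinarith [norm_nonneg (γ-2)])
    have hsn : ‖s‖ = 1 := norm_eq_one_of_close (lt_of_le_of_lt hs1 (by norm_num))
    obtain ⟨x, hαx, hxn⟩ : ∃ x : ℚ_[2], α*x = s - 1 ∧ ‖x‖ ≤ 1 := by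
      refine ⟨(s-1)/α, ?_, ?_⟩
      · field_simp
      · rw [norm_div, hα2, div_le_one (by norm_num)]
        linarith
    have hd : ‖α*γ - 1‖ = 1 := by
      rw [show α*γ - 1 = -(1 - α*γ) by ring, norm_neg]
      apply norm_eq_one_of_close
      rw [show (1 - α*γ) - 1 = -(α*γ) by ring, norm_neg, hαγ4]
      norm_num
    have hd0 : α*γ - 1 ≠ 0 := by
      intro h; rw [h, norm_zero] at hd; norm_num at hd
    have h4αγ : ‖4 - α*γ‖ ≤ 1/8 := by
      have hn4 : ‖(4:ℚ_[2])‖ = 1/4 := by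
        rw [show (4:ℚ_[2]) = 2*2 by norm_num, norm_mul, norm2]; norm_num
      have h1 : ‖α*γ/4‖ = 1 := by rw [norm_div, hn4, hαγ4]; norm_num
      have h2 := odd_sub_one' h1
      have h3 : 4 - α*γ = -(4*(α*γ/4 - 1)) := by ring
      rw [h3, norm_neg, norm_mul, hn4]; linarith
    obtain ⟨a, ha, ha1⟩ := sqrt_of_close (3/(α*γ - 1)) (by
      have h : 3/(α*γ-1) - 1 = (4 - α*γ)/(α*γ-1) := by
        field_simp; ring
      rw [h, norm_div, hd, div_one]; exact h4αγ)
    have han : ‖a‖ = 1 := norm_eq_one_of_close (lt_of_le_of_lt ha1 (by norm_num))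
    have ha' : a^2*(α*γ - 1) = 3 := by
      rw [ha]; field_simp
    have has1 : ‖1 - a*s‖ ≤ 1/4 := by
      have h : (1:ℚ_[2]) - a*s = -((a-1)*s + (s-1)) := by ring
      rw [h, norm_neg]
      calc ‖(a-1)*s + (s-1)‖ ≤ max ‖(a-1)*s‖ ‖s-1‖ := Padic.nonarchimedean _ _
      _ ≤ 1/4 := by
          apply max_le _ hs1
          rw [norm_mul, hsn]; linarith
    obtain ⟨b, hb, hbn⟩ : ∃ b : ℚ_[2], 2*b = 1 - a*s ∧ ‖b‖ ≤ 1/2 := by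
      refine ⟨(1 - a*s)/2, ?_, ?_⟩
      · field_simp
      · rw [norm_div, norm2]
        rw [div_le_iff₀ (by norm_num)]
        linarith
    have hg11 : α*x^2 + 2*x + γ = 2 := by
      have hx2 : x*(s+1) = 2 - γ := by
        apply mul_left_cancel₀ hα0
        linear_combination (s+1)*hαx + hs
      linear_combination x*hαx + hx2
    have habx : ‖a + b*x‖ ≤ 1 := by
      calc ‖a + b*x‖ ≤ max ‖a‖ ‖b*x‖ := Padic.nonarchimedean _ _
      _ ≤ 1 := by
          apply max_le (le_of_eq han)
          rw [norm_mul]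
          nlinarith [norm_nonneg b, norm_nonneg x]
    have hQT : (!![x, a + b*x; 1, b])ᵀ = !![x, 1; a + b*x, b] := by
      ext i j; fin_cases i <;> fin_cases j <;> rfl
    refine ⟨!![x, a + b*x; 1, b], ?_, ?_, Or.inr ?_⟩
    · intro i j
      fin_cases i <;> fin_cases j <;> simp <;>
        first | exact hxn | exact habx | linarith | norm_num
    · have h : (!![x, a + b*x; 1, b]).det = -a := by
        rw [Matrix.det_fin_two_of]; ring
      rw [h, norm_neg, han]
    · rw [hQT]
      ext i j
      fin_cases i <;> fin_cases j <;>
        simp [Matrix.mul_apply, Fin.sum_univ_two]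
      · linear_combination hg11
      · linear_combination a*hαx + b*hg11 + hb
      · linear_combination a*hαx + b*hg11 + hb
      · linear_combination 2*a*b*hαx + b^2*hg11 + (1/2)*ha' - (a^2/2)*hs + (1 + b - (1-a*s)/2)*hb

lemma matrix_mul_norm_le {l m n : Type*} [Fintype m] (A : Matrix l m ℚ_[2]) (B : Matrix m n ℚ_[2])
    (hA : ∀ i j, ‖A i j‖ ≤ 1) (hB : ∀ i j, ‖B i j‖ ≤ 1) : ∀ i j, ‖(A*B) i j‖ ≤ 1 := by
  intro i j
  rw [Matrix.mul_apply]
  refine IsUltrametricDist.norm_sum_le_of_forall_le_of_nonneg (by norm_num) ?_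
  intro k _
  rw [norm_mul]
  exact mul_le_one₀ (hA i k) (norm_nonneg _) (hB k j)

lemma block2 (a b c : ℚ_[2]) (hb : b ≠ 0) (hab : ‖a‖ < ‖b‖) (hcb : ‖c‖ < ‖b‖) :
    ∃ (Q : Matrix (Fin 2) (Fin 2) ℚ_[2]) (k : ℤ), (∀ i j, ‖Q i j‖ ≤ 1) ∧ ‖Q.det‖ = 1 ∧
      (Qᵀ * !![a,b;b,c] * Q = ((2:ℚ_[2])^k) • !![0,1;1,0] ∨
       Qᵀ * !![a,b;b,c] * Q = ((2:ℚ_[2])^k) • !![2,1;1,2]) := by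
  set k : ℤ := b.valuation with hk
  set w : ℚ_[2] := (2:ℚ_[2])^k with hw
  have hwnorm : ‖w‖ = ‖b‖ := by
    have h1 : ‖(2:ℚ_[2])^k‖ = (2:ℝ)^(-k) := by
      simpa using @Padic.norm_p_zpow 2 ⟨Nat.prime_two⟩ k
    have h2 : ‖b‖ = (2:ℝ)^(-k) := by
      rw [hk]; simpa using Padic.norm_eq_zpow_neg_valuation hb
    rw [hw, h1, h2]
  have hbnorm : 0 < ‖b‖ := norm_pos_iff.2 hb
  have hw0 : w ≠ 0 := by
    intro h; rw [h, norm_zero] at hwnorm; exact absurd hwnorm.symm (ne_of_gt hbnorm)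
  set β : ℚ_[2] := b/w with hβ
  have hβn : ‖β‖ = 1 := by rw [hβ, norm_div, hwnorm, div_self (ne_of_gt hbnorm)]
  have hβ0 : β ≠ 0 := by intro h; rw [h, norm_zero] at hβn; norm_num at hβn
  have hαn : ‖a/w‖ ≤ 1/2 := by
    apply le_half_of_lt_one
    rw [norm_div, hwnorm, div_lt_one hbnorm]; exact hab
  have hγn : ‖c*β⁻¹*β⁻¹/w‖ ≤ 1/2 := by
    apply le_half_of_lt_one
    rw [norm_div, norm_mul, norm_mul, norm_inv, hβn, hwnorm]
    simp only [inv_one, mul_one]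
    rw [div_lt_one hbnorm]; exact hcb
  obtain ⟨Q₁, hQ₁n, hQ₁det, hQ₁⟩ := block2_unit (a/w) (c*β⁻¹*β⁻¹/w) hαn hγn
  set D : Matrix (Fin 2) (Fin 2) ℚ_[2] := !![1, 0; 0, β⁻¹] with hD
  have hDT : Dᵀ = D := by ext i j; fin_cases i <;> fin_cases j <;> rfl
  have hDBD : Dᵀ * !![a,b;b,c] * D = w • !![a/w, 1; 1, c*β⁻¹*β⁻¹/w] := by
    rw [hDT]
    ext i j
    fin_cases i <;> fin_cases j <;>
      simp [hD, Matrix.mul_apply, Fin.sum_univ_two, Matrix.smul_apply] <;>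
      field_simp [hβ, hb, hw0] <;> ring_nf <;> simp [hβ, hw0]
  have hDn : ∀ i j, ‖D i j‖ ≤ 1 := by
    intro i j
    fin_cases i <;> fin_cases j <;>
      simp [hD, hβn]
  have key : ∀ i j, ‖(D * Q₁) i j‖ ≤ 1 := matrix_mul_norm_le D Q₁ hDn hQ₁n
  refine ⟨D * Q₁, k, key, ?_, ?_⟩
  · rw [Matrix.det_mul, norm_mul, hQ₁det, mul_one]
    have : D.det = β⁻¹ := by rw [hD, Matrix.det_fin_two_of]; ring
    rw [this, norm_inv, hβn]; norm_num
  · have hexp : (D * Q₁)ᵀ * !![a,b;b,c] * (D * Q₁)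
        = w • (Q₁ᵀ * !![a/w, 1; 1, c*β⁻¹*β⁻¹/w] * Q₁) := by
      rw [Matrix.transpose_mul]
      calc Q₁ᵀ * Dᵀ * !![a,b;b,c] * (D * Q₁)
          = Q₁ᵀ * (Dᵀ * !![a,b;b,c] * D) * Q₁ := by
            simp only [Matrix.mul_assoc]
      _ = Q₁ᵀ * (w • !![a/w, 1; 1, c*β⁻¹*β⁻¹/w]) * Q₁ := by rw [hDBD]
      _ = w • (Q₁ᵀ * !![a/w, 1; 1, c*β⁻¹*β⁻¹/w] * Q₁) := by
            rw [Matrix.mul_smul, Matrix.smul_mul]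
    rw [hexp]
    rcases hQ₁ with h | h
    · left; rw [h]
    · right; rw [h]

def BD {ι : Type} (H : Matrix ι ι ℚ_[2]) (σ : Equiv.Perm ι) : Prop :=
  (∀ i, σ (σ i) = i) ∧
  (∀ i j, j ≠ i → j ≠ σ i → H i j = 0) ∧
  (∀ i, σ i = i → H i i ≠ 0) ∧
  (∀ i, σ i ≠ i → ∃ k : ℤ,
    (H i i = 0 ∧ H i (σ i) = (2:ℚ_[2])^k ∧ H (σ i) (σ i) = 0) ∨
    (H i i = 2*(2:ℚ_[2])^k ∧ H i (σ i) = (2:ℚ_[2])^k ∧ H (σ i) (σ i) = 2*(2:ℚ_[2])^k))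

def Decomp {ι : Type} [Fintype ι] [DecidableEq ι] (G : Matrix ι ι ℚ_[2]) : Prop :=
  ∃ M : Matrix ι ι ℚ_[2], (∀ i j, ‖M i j‖ ≤ 1) ∧ ‖M.det‖ = 1 ∧
    ∃ σ : Equiv.Perm ι, BD (Mᵀ * G * M) σ

lemma decomp_congr {ι : Type} [Fintype ι] [DecidableEq ι] {G M₁ : Matrix ι ι ℚ_[2]}
    (h₁ : ∀ i j, ‖M₁ i j‖ ≤ 1) (h₂ : ‖M₁.det‖ = 1)
    (h : Decomp (M₁ᵀ * G * M₁)) : Decomp G := by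
  obtain ⟨M₂, hn, hd, σ, hbd⟩ := h
  refine ⟨M₁ * M₂, matrix_mul_norm_le _ _ h₁ hn, ?_, σ, ?_⟩
  · rw [Matrix.det_mul, norm_mul, h₂, hd, mul_one]
  · have : (M₁*M₂)ᵀ * G * (M₁*M₂) = M₂ᵀ * (M₁ᵀ * G * M₁) * M₂ := by
      rw [Matrix.transpose_mul]
      simp only [Matrix.mul_assoc]
    rwa [this]

lemma decomp_reindex {ι κ : Type} [Fintype ι] [DecidableEq ι] [Fintype κ] [DecidableEq κ]
    (e : κ ≃ ι) {G : Matrix ι ι ℚ_[2]}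
    (h : Decomp (G.submatrix e e)) : Decomp G := by
  obtain ⟨M, hn, hd, σ, hσ, hz, hdiag, hoff⟩ := h
  have key : (M.submatrix e.symm e.symm)ᵀ * G * (M.submatrix e.symm e.symm)
      = (Mᵀ * G.submatrix e e * M).submatrix e.symm e.symm := by
    rw [Matrix.transpose_submatrix]
    have hG : G = (G.submatrix e e).submatrix e.symm e.symm := by
      ext i j; simp
    calc Mᵀ.submatrix e.symm e.symm * G * M.submatrix e.symm e.symm
        = Mᵀ.submatrix e.symm e.symm * (G.submatrix ⇑e ⇑e).submatrix e.symm e.symm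
            * M.submatrix e.symm e.symm := by rw [← hG]
    _ = (Mᵀ * G.submatrix ⇑e ⇑e).submatrix e.symm e.symm * M.submatrix e.symm e.symm := by
          rw [Matrix.submatrix_mul_equiv]
    _ = (Mᵀ * G.submatrix ⇑e ⇑e * M).submatrix e.symm e.symm := by
          rw [Matrix.submatrix_mul_equiv]
  refine ⟨M.submatrix e.symm e.symm, ?_, ?_, e.permCongr σ, ?_, ?_, ?_, ?_⟩
  · intro i j; exact hn _ _
  · rw [Matrix.det_submatrix_equiv_self]; exact hd
  · intro i
    simp only [Equiv.permCongr_apply, Equiv.symm_apply_apply]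
    rw [hσ, Equiv.apply_symm_apply]
  · intro i j hji hjσ
    rw [key]
    apply hz
    · simpa using fun h => hji (by rw [← Equiv.apply_symm_apply e j, h, Equiv.apply_symm_apply])
    · intro h
      apply hjσ
      simp only [Equiv.permCongr_apply]
      rw [← h, Equiv.apply_symm_apply]
  · intro i hi
    rw [key]
    apply hdiag
    simp only [Equiv.permCongr_apply] at hi
    apply e.injective
    rw [hi, Equiv.apply_symm_apply]
  · intro i hi
    have hi' : σ (e.symm i) ≠ e.symm i := by
      intro h
      apply hi
      simp only [Equiv.permCongr_apply, h, Equiv.apply_symm_apply]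
    obtain ⟨k, hk⟩ := hoff (e.symm i) hi'
    refine ⟨k, ?_⟩
    have h1 : e.symm (e.permCongr σ i) = σ (e.symm i) := by
      simp [Equiv.permCongr_apply]
    rw [key]
    simpa [Matrix.submatrix_apply, h1] using hk

lemma decomp_fromBlocks {ι κ : Type} [Fintype ι] [DecidableEq ι] [Fintype κ] [DecidableEq κ]
    {A : Matrix ι ι ℚ_[2]} {D : Matrix κ κ ℚ_[2]} (hA : Decomp A) (hD : Decomp D) :
    Decomp (Matrix.fromBlocks A 0 0 D) := by
  obtain ⟨MA, hAn, hAd, σA, hA1, hA2, hA3, hA4⟩ := hA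
  obtain ⟨MD, hDn, hDd, σD, hD1, hD2, hD3, hD4⟩ := hD
  have key : (Matrix.fromBlocks MA 0 0 MD)ᵀ * (Matrix.fromBlocks A 0 0 D)
        * (Matrix.fromBlocks MA 0 0 MD)
      = Matrix.fromBlocks (MAᵀ * A * MA) 0 0 (MDᵀ * D * MD) := by
    rw [Matrix.fromBlocks_transpose, Matrix.fromBlocks_multiply, Matrix.fromBlocks_multiply]
    simp
  refine ⟨Matrix.fromBlocks MA 0 0 MD, ?_, ?_, Equiv.sumCongr σA σD, ?_, ?_, ?_, ?_⟩
  · intro i j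
    rcases i with a|d <;> rcases j with b|e <;> simp <;>
      first | exact hAn _ _ | exact hDn _ _
  · rw [Matrix.det_fromBlocks_zero₂₁, norm_mul, hAd, hDd, mul_one]
  · intro i; rcases i with a|d <;> simp [hA1, hD1]
  · intro i j hji hjσ
    rw [key]
    rcases i with a|d <;> rcases j with b|e
    · have h1 : b ≠ a := fun h => hji (by rw [h])
      have h2 : b ≠ σA a := fun h => hjσ (by simp [h])
      simpa using hA2 a b h1 h2
    · simp
    · simp
    · have h1 : e ≠ d := fun h => hji (by rw [h])
      have h2 : e ≠ σD d := fun h => hjσ (by simp [h])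
      simpa using hD2 d e h1 h2
  · intro i hi
    rw [key]
    rcases i with a|d
    · have h : σA a = a := by simpa using hi
      simpa using hA3 a h
    · have h : σD d = d := by simpa using hi
      simpa using hD3 d h
  · intro i hi
    rw [key]
    rcases i with a|d <;>
      simp only [Equiv.sumCongr_apply, Sum.map_inl, Sum.map_inr] at hi ⊢
    · have h : σA a ≠ a := fun h => hi (by rw [h])
      obtain ⟨k, hk⟩ := hA4 a h
      exact ⟨k, by simpa using hk⟩
    · have h : σD d ≠ d := fun h => hi (by rw [h])
      obtain ⟨k, hk⟩ := hD4 d h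
      exact ⟨k, by simpa using hk⟩

lemma decomp_pivot1 (A : Matrix (Fin 1) (Fin 1) ℚ_[2]) (hA : A 0 0 ≠ 0) : Decomp A := by
  refine ⟨1, ?_, ?_, Equiv.refl _, ?_, ?_, ?_, ?_⟩
  · intro i j
    by_cases h : i = j <;> simp [Matrix.one_apply, h]
  · simp
  · intro i; rfl
  · intro i j hji _
    exact absurd (Subsingleton.elim j i) hji
  · intro i _
    simpa using (by simpa [Subsingleton.elim i 0] using hA : A i i ≠ 0)
  · intro i hi; exact absurd rfl hi

lemma decomp_pivot2 (a b c : ℚ_[2]) (hb : b ≠ 0) (hab : ‖a‖ < ‖b‖) (hcb : ‖c‖ < ‖b‖) :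
    Decomp !![a,b;b,c] := by
  obtain ⟨Q, k, hQn, hQd, hQ⟩ := block2 a b c hb hab hcb
  refine ⟨Q, hQn, hQd, Equiv.swap 0 1, ?_, ?_, ?_, ?_⟩
  · intro i; simp
  · intro i j hji hjσ
    exfalso
    fin_cases i <;> fin_cases j <;>
      simp_all [Equiv.swap_apply_left, Equiv.swap_apply_right]
  · intro i hi
    exfalso
    fin_cases i <;> simp_all [Equiv.swap_apply_left, Equiv.swap_apply_right]
  · intro i _
    refine ⟨k, ?_⟩
    rcases hQ with h | h
    · left
      fin_cases i <;>
        simp [h, Equiv.swap_apply_left, Equiv.swap_apply_right, Matrix.smul_apply] <;> ring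
    · right
      fin_cases i <;>
        simp [h, Equiv.swap_apply_left, Equiv.swap_apply_right, Matrix.smul_apply] <;> ring

lemma split_general {ι : Type} [Fintype ι] [DecidableEq ι] {n : ℕ}
    (G : Matrix (ι ⊕ Fin n) (ι ⊕ Fin n) ℚ_[2]) (hsymm : G.IsSymm) (hnd : G.det ≠ 0)
    (X : Matrix ι (Fin n) ℚ_[2]) (hXn : ∀ i j, ‖X i j‖ ≤ 1)
    (hAX : G.toBlocks₁₁ * X = -(G.toBlocks₁₂))
    (hAdec : Decomp G.toBlocks₁₁) (hAdet : G.toBlocks₁₁.det ≠ 0)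
    (ih : ∀ D : Matrix (Fin n) (Fin n) ℚ_[2], D.IsSymm → D.det ≠ 0 → Decomp D) :
    Decomp G := by
  set A := G.toBlocks₁₁ with hA
  set B := G.toBlocks₁₂ with hB
  set C := G.toBlocks₂₁ with hC
  set Dm := G.toBlocks₂₂ with hDm
  have hGb : G = Matrix.fromBlocks A B C Dm := (Matrix.fromBlocks_toBlocks G).symm
  have hCB : C = Bᵀ := by
    ext i j
    exact hsymm.apply (Sum.inl j) (Sum.inr i)
  have hAT : Aᵀ = A := by
    ext i j
    exact hsymm.apply (Sum.inl i) (Sum.inl j)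
  have hDT : Dmᵀ = Dm := by
    ext i j
    exact hsymm.apply (Sum.inr i) (Sum.inr j)
  have hXA : Xᵀ * A = -C := by
    calc Xᵀ * A = Xᵀ * Aᵀ := by rw [hAT]
    _ = (A * X)ᵀ := by rw [Matrix.transpose_mul]
    _ = (-B)ᵀ := by rw [hAX]
    _ = -C := by rw [Matrix.transpose_neg, hCB]
  set D' : Matrix (Fin n) (Fin n) ℚ_[2] := Xᵀ * B + Dm with hD'
  have hD'symm : D'.IsSymm := by
    show D'ᵀ = D'
    rw [hD', Matrix.transpose_add, Matrix.transpose_mul, Matrix.transpose_transpose, hDT]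
    congr 1
    have hBt : Bᵀ = -(Xᵀ * A) := by rw [hXA, neg_neg]; exact hCB.symm
    calc Bᵀ * X = (-(Xᵀ * A)) * X := by rw [hBt]
    _ = Xᵀ * (-(A * X)) := by rw [Matrix.neg_mul, Matrix.mul_neg, Matrix.mul_assoc]
    _ = Xᵀ * B := by rw [hAX, neg_neg]
  set C₁ : Matrix (ι ⊕ Fin n) (ι ⊕ Fin n) ℚ_[2] := Matrix.fromBlocks 1 X 0 1 with hC₁
  have hC₁n : ∀ i j, ‖C₁ i j‖ ≤ 1 := by
    intro i j
    rcases i with a|d <;> rcases j with b|e <;>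
      simp [hC₁, Matrix.one_apply] <;>
      first | exact hXn _ _ | split <;> norm_num
  have hC₁d : C₁.det = 1 := by
    rw [hC₁, Matrix.det_fromBlocks_zero₂₁]
    simp
  have key : C₁ᵀ * G * C₁ = Matrix.fromBlocks A 0 0 D' := by
    rw [hGb, hC₁, Matrix.fromBlocks_transpose, Matrix.fromBlocks_multiply,
      Matrix.fromBlocks_multiply]
    simp only [Matrix.transpose_one, Matrix.transpose_zero, Matrix.one_mul, Matrix.mul_one,
      Matrix.zero_mul, Matrix.mul_zero, add_zero, zero_add, Matrix.mul_assoc]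
    have h1 : A * X + B = 0 := by rw [hAX]; exact neg_add_cancel B
    have h2 : Xᵀ * A + C = 0 := by rw [hXA]; exact neg_add_cancel C
    rw [h1, h2, Matrix.zero_mul, zero_add, ← hD']
  have hdet' : D'.det ≠ 0 := by
    have h5 : (Matrix.fromBlocks A 0 0 D').det = A.det * D'.det :=
      Matrix.det_fromBlocks_zero₂₁ _ _ _
    have h6 : (C₁ᵀ * G * C₁).det = G.det := by
      rw [Matrix.det_mul, Matrix.det_mul, Matrix.det_transpose, hC₁d]; ring
    rw [key, h5] at h6
    intro h0
    rw [h0, mul_zero] at h6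
    exact hnd h6.symm
  apply decomp_congr hC₁n (by rw [hC₁d]; norm_num)
  rw [key]
  exact decomp_fromBlocks hAdec (ih D' hD'symm hdet')

lemma isSymm_submatrix {ι κ : Type} (G : Matrix ι ι ℚ_[2]) (h : G.IsSymm) (e : κ → ι) :
    (G.submatrix e e).IsSymm :=
  Matrix.IsSymm.ext fun i j => h.apply (e i) (e j)

lemma split1 (n : ℕ) (G : Matrix (Fin 1 ⊕ Fin n) (Fin 1 ⊕ Fin n) ℚ_[2])
    (hsymm : G.IsSymm) (hnd : G.det ≠ 0)
    (hpiv : G (Sum.inl 0) (Sum.inl 0) ≠ 0)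
    (hmax : ∀ j, ‖G (Sum.inl 0) (Sum.inr j)‖ ≤ ‖G (Sum.inl 0) (Sum.inl 0)‖)
    (ih : ∀ D : Matrix (Fin n) (Fin n) ℚ_[2], D.IsSymm → D.det ≠ 0 → Decomp D) :
    Decomp G := by
  have hA11 : ∀ i j : Fin 1, G.toBlocks₁₁ i j = G (Sum.inl 0) (Sum.inl 0) := by
    intro i j
    rw [Subsingleton.elim i 0, Subsingleton.elim j 0]
    rfl
  apply split_general G hsymm hnd
    (Matrix.of (fun (_ : Fin 1) j => -(G (Sum.inl 0) (Sum.inr j))/(G (Sum.inl 0) (Sum.inl 0))))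
    ?_ ?_ ?_ ?_ ih
  · intro i j
    show ‖-(G (Sum.inl 0) (Sum.inr j))/(G (Sum.inl 0) (Sum.inl 0))‖ ≤ 1
    rw [norm_div, norm_neg, div_le_one (norm_pos_iff.2 hpiv)]
    exact hmax j
  · ext i j
    rw [Subsingleton.elim i 0]
    rw [Matrix.mul_apply, Fin.sum_univ_one, hA11 0 0]
    show G (Sum.inl 0) (Sum.inl 0) * (-(G (Sum.inl 0) (Sum.inr j))/(G (Sum.inl 0) (Sum.inl 0)))
      = -(G.toBlocks₁₂) 0 j
    rw [mul_div_cancel₀ _ hpiv]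
    rfl
  · exact decomp_pivot1 _ (by rw [hA11]; exact hpiv)
  · rw [Matrix.det_fin_one, hA11]
    exact hpiv

lemma split2 (n : ℕ) (G : Matrix (Fin 2 ⊕ Fin n) (Fin 2 ⊕ Fin n) ℚ_[2])
    (hsymm : G.IsSymm) (hnd : G.det ≠ 0)
    (hb0 : G (Sum.inl 0) (Sum.inl 1) ≠ 0)
    (haa : ‖G (Sum.inl 0) (Sum.inl 0)‖ < ‖G (Sum.inl 0) (Sum.inl 1)‖)
    (hcc : ‖G (Sum.inl 1) (Sum.inl 1)‖ < ‖G (Sum.inl 0) (Sum.inl 1)‖)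
    (hmax : ∀ x y, ‖G x y‖ ≤ ‖G (Sum.inl 0) (Sum.inl 1)‖)
    (ih : ∀ D : Matrix (Fin n) (Fin n) ℚ_[2], D.IsSymm → D.det ≠ 0 → Decomp D) :
    Decomp G := by
  set a := G (Sum.inl 0) (Sum.inl 0) with ha
  set b := G (Sum.inl 0) (Sum.inl 1) with hb
  set c := G (Sum.inl 1) (Sum.inl 1) with hc
  have hba : G (Sum.inl 1) (Sum.inl 0) = b := hsymm.apply (Sum.inl 0) (Sum.inl 1)
  have hbpos : 0 < ‖b‖ := norm_pos_iff.2 hb0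
  have hA2 : G.toBlocks₁₁ = !![a, b; b, c] := by
    ext i j
    fin_cases i <;> fin_cases j <;>
      simp [Matrix.toBlocks₁₁, ha, hb, hc, hba]
  have hΔn : ‖a*c - b^2‖ = ‖b‖^2 := by
    have h1 : ‖a*c‖ < ‖b‖^2 := by
      rw [norm_mul]
      calc ‖a‖*‖c‖ < ‖b‖*‖b‖ := by
            apply mul_lt_mul'' haa hcc (norm_nonneg _) (norm_nonneg _)
      _ = ‖b‖^2 := by ring
    have h2 : ‖-(b^2)‖ = ‖b‖^2 := by rw [norm_neg, norm_pow]
    have h3 : a*c - b^2 = a*c + -(b^2) := by ring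
    rw [h3, Padic.add_eq_max_of_ne (by rw [h2]; exact ne_of_lt h1), h2]
    exact max_eq_right (le_of_lt h1)
  have hΔ0 : a*c - b^2 ≠ 0 := by
    intro h
    rw [h, norm_zero] at hΔn
    nlinarith
  have hnum : ∀ p q r s : ℚ_[2], ‖p‖ ≤ ‖b‖ → ‖q‖ ≤ ‖b‖ → ‖r‖ ≤ ‖b‖ → ‖s‖ ≤ ‖b‖ →
      ‖-(p*q - r*s)/(a*c - b^2)‖ ≤ 1 := by
    intro p q r s hp hq hr hs
    rw [norm_div, norm_neg, hΔn, div_le_one (by positivity)]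
    rw [sub_eq_add_neg]
    calc ‖p*q + -(r*s)‖ ≤ max ‖p*q‖ ‖-(r*s)‖ := Padic.nonarchimedean _ _
    _ ≤ ‖b‖^2 := by
        apply max_le
        · rw [norm_mul]; nlinarith [norm_nonneg p, norm_nonneg q]
        · rw [norm_neg, norm_mul]; nlinarith [norm_nonneg r, norm_nonneg s]
  apply split_general G hsymm hnd
    (Matrix.of (fun (k : Fin 2) j =>
      ![ -(c * G (Sum.inl 0) (Sum.inr j) - b * G (Sum.inl 1) (Sum.inr j))/(a*c - b^2),
         -(a * G (Sum.inl 1) (Sum.inr j) - b * G (Sum.inl 0) (Sum.inr j))/(a*c - b^2) ] k))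
    ?_ ?_ ?_ ?_ ih
  · intro k j
    fin_cases k
    · exact hnum _ _ _ _ (le_of_lt hcc) (hmax _ _) (le_refl _) (hmax _ _)
    · exact hnum _ _ _ _ (le_of_lt haa) (hmax _ _) (le_refl _) (hmax _ _)
  · rw [hA2]
    ext k j
    rw [Matrix.mul_apply, Fin.sum_univ_two]
    fin_cases k <;>
      show _ * (-(_ - _)/(a*c - b^2)) + _ * (-(_ - _)/(a*c - b^2)) = -(G.toBlocks₁₂) _ j <;>
      show _ = -(G (Sum.inl _) (Sum.inr j)) <;>
      simp only [Fin.zero_eta, Fin.mk_one, Matrix.of_apply, Matrix.cons_val', Matrix.cons_val_zero,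
        Matrix.cons_val_one, Matrix.cons_val_fin_one, Matrix.empty_val'] <;>
      rw [mul_div_assoc', mul_div_assoc', ← add_div, div_eq_iff hΔ0] <;>
      ring
  · rw [hA2]; exact decomp_pivot2 a b c hb0 haa hcc
  · rw [hA2, Matrix.det_fin_two_of]
    intro h0; apply hΔ0; linear_combination h0

lemma main_decomp : ∀ n (G : Matrix (Fin n) (Fin n) ℚ_[2]), G.IsSymm → G.det ≠ 0 → Decomp G := by
  intro n
  induction n using Nat.strong_induction_on with
  | _ n IH =>
  intro G hsymm hnd
  rcases Nat.eq_zero_or_pos n with hn | hn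
  · subst hn
    exact ⟨1, fun i _ => i.elim0, by simp, Equiv.refl _,
      fun i => i.elim0, fun i => i.elim0, fun i => i.elim0, fun i => i.elim0⟩
  · obtain ⟨p, -, hmaxp⟩ := Finset.exists_max_image Finset.univ
      (fun p : Fin n × Fin n => ‖G p.1 p.2‖) ⟨(⟨0,hn⟩,⟨0,hn⟩), Finset.mem_univ _⟩
    have hmax : ∀ i j, ‖G i j‖ ≤ ‖G p.1 p.2‖ := fun i j => hmaxp (i,j) (Finset.mem_univ _)
    have hG0 : G p.1 p.2 ≠ 0 := by
      intro h0
      apply hnd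
      have hGz : G = 0 := by
        ext i j
        have h := hmax i j
        rw [h0, norm_zero] at h
        simpa using norm_le_zero_iff.1 h
      rw [hGz]
      haveI : Nonempty (Fin n) := ⟨⟨0,hn⟩⟩
      exact Matrix.det_zero
    have hppos : 0 < ‖G p.1 p.2‖ := norm_pos_iff.2 hG0
    by_cases hdiag : ∃ i, ‖G p.1 p.2‖ ≤ ‖G i i‖
    · obtain ⟨i, hi⟩ := hdiag
      have h1 : n = 1 + (n - 1) := by omega
      set τ : Equiv.Perm (Fin n) := Equiv.swap ⟨0, hn⟩ i with hτ
      set ε : (Fin 1 ⊕ Fin (n-1)) ≃ Fin n := (finSumFinEquiv.trans (finCongr h1.symm)).trans τ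
        with hε
      have hε0 : ε (Sum.inl 0) = i := by
        have h2 : (finCongr h1.symm) (finSumFinEquiv (Sum.inl (0 : Fin 1))) = ⟨0, hn⟩ := by
          apply Fin.ext
          simp
        show τ ((finCongr h1.symm) (finSumFinEquiv (Sum.inl (0 : Fin 1)))) = i
        rw [h2, hτ]
        exact Equiv.swap_apply_left _ _
      apply decomp_reindex ε
      apply split1 (n-1) (G.submatrix ε ε) (isSymm_submatrix G hsymm ε) ?_ ?_ ?_ ?_
      · rw [Matrix.det_submatrix_equiv_self]; exact hnd
      · show G (ε (Sum.inl 0)) (ε (Sum.inl 0)) ≠ 0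
        rw [hε0]
        intro h0
        rw [h0, norm_zero] at hi
        linarith
      · intro j
        show ‖G (ε (Sum.inl 0)) (ε (Sum.inr j))‖ ≤ ‖G (ε (Sum.inl 0)) (ε (Sum.inl 0))‖
        rw [hε0]
        exact le_trans (hmax _ _) hi
      · intro D hs hd
        exact IH (n-1) (by omega) D hs hd
    · push_neg at hdiag
      have hij : p.1 ≠ p.2 := by
        intro h
        have := hdiag p.1
        rw [← h] at this
        exact lt_irrefl _ this
      have h2n : 2 ≤ n := by
        rcases Nat.lt_or_ge n 2 with h | h
        · exfalso
          have h1 : n = 1 := by omega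
          apply hij
          have : Subsingleton (Fin n) := by rw [h1]; infer_instance
          exact Subsingleton.elim _ _
        · exact h
      have h0n : (0 : ℕ) < n := hn
      have h1n : (1 : ℕ) < n := by omega
      have h1 : n = 2 + (n - 2) := by omega
      set c₁ : Equiv.Perm (Fin n) := Equiv.swap ⟨0, h0n⟩ p.1 with hc₁
      have hy0 : c₁ p.2 ≠ ⟨0, h0n⟩ := by
        intro h
        apply hij
        have := congrArg c₁ h
        rw [Equiv.swap_apply_self] at this
        rw [this, hc₁, Equiv.swap_apply_left]
      set τ : Equiv.Perm (Fin n) := (Equiv.swap ⟨1, h1n⟩ (c₁ p.2)).trans c₁ with hτ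
      have hτ0 : τ ⟨0, h0n⟩ = p.1 := by
        show c₁ (Equiv.swap ⟨1, h1n⟩ (c₁ p.2) ⟨0, h0n⟩) = p.1
        rw [Equiv.swap_apply_of_ne_of_ne (by intro h; exact absurd (congrArg Fin.val h) (by simp))
          (Ne.symm hy0)]
        rw [hc₁]
        exact Equiv.swap_apply_left _ _
      have hτ1 : τ ⟨1, h1n⟩ = p.2 := by
        show c₁ (Equiv.swap ⟨1, h1n⟩ (c₁ p.2) ⟨1, h1n⟩) = p.2
        rw [Equiv.swap_apply_left, Equiv.swap_apply_self]
      set ε : (Fin 2 ⊕ Fin (n-2)) ≃ Fin n := (finSumFinEquiv.trans (finCongr h1.symm)).trans τ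
        with hε
      have hε0 : ε (Sum.inl 0) = p.1 := by
        have h2 : (finCongr h1.symm) (finSumFinEquiv (Sum.inl (0 : Fin 2))) = ⟨0, h0n⟩ := by
          apply Fin.ext; simp
        show τ ((finCongr h1.symm) (finSumFinEquiv (Sum.inl (0 : Fin 2)))) = p.1
        rw [h2, hτ0]
      have hε1 : ε (Sum.inl 1) = p.2 := by
        have h2 : (finCongr h1.symm) (finSumFinEquiv (Sum.inl (1 : Fin 2))) = ⟨1, h1n⟩ := by
          apply Fin.ext; simp
        show τ ((finCongr h1.symm) (finSumFinEquiv (Sum.inl (1 : Fin 2)))) = p.2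
        rw [h2, hτ1]
      apply decomp_reindex ε
      apply split2 (n-2) (G.submatrix ε ε) (isSymm_submatrix G hsymm ε) ?_ ?_ ?_ ?_ ?_ ?_
      · rw [Matrix.det_submatrix_equiv_self]; exact hnd
      · show G (ε (Sum.inl 0)) (ε (Sum.inl 1)) ≠ 0
        rw [hε0, hε1]; exact hG0
      · show ‖G (ε (Sum.inl 0)) (ε (Sum.inl 0))‖ < ‖G (ε (Sum.inl 0)) (ε (Sum.inl 1))‖
        rw [hε0, hε1]; exact hdiag p.1
      · show ‖G (ε (Sum.inl 1)) (ε (Sum.inl 1))‖ < ‖G (ε (Sum.inl 0)) (ε (Sum.inl 1))‖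
        rw [hε0, hε1]; exact hdiag p.2
      · intro x y
        show ‖G (ε x) (ε y)‖ ≤ ‖G (ε (Sum.inl 0)) (ε (Sum.inl 1))‖
        rw [hε0, hε1]; exact hmax _ _
      · intro D hs hd
        exact IH (n-2) (by omega) D hs hd

/-- Every nondegenerate ℤ₂-lattice (presented by the Gram matrix `G` over ℚ₂ of a basis,
symmetric and with nonzero determinant) is an orthogonal direct sum of 1-dimensional
lattices and copies of the lattices `[[0,1],[1,0]]` and `[[2,1],[1,2]]` scaled by powers
of 2.  Concretely: there is a change of basis `P ∈ GL_n(ℤ₂)` after which the Gram matrix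
`H` is block diagonal, with blocks given by an involution `σ` of the index set; singleton
blocks are (nondegenerate) 1-dimensional lattices, and each 2-element block `{i, σ i}`
is `2^k • [[0,1],[1,0]]` or `2^k • [[2,1],[1,2]]` for some power `2^k` of `2`. -/
theorem lattice_orthogonal_decomposition (n : ℕ) (G : Matrix (Fin n) (Fin n) ℚ_[2])
    (hsymm : G.IsSymm) (hnd : G.det ≠ 0) :
    ∃ P : Matrix (Fin n) (Fin n) ℤ_[2], IsUnit P.det ∧
      ∃ H : Matrix (Fin n) (Fin n) ℚ_[2],
        H = (P.map (fun a => (a : ℚ_[2])))ᵀ * G * (P.map (fun a => (a : ℚ_[2]))) ∧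
        ∃ σ : Equiv.Perm (Fin n),
          (∀ i, σ (σ i) = i) ∧
          (∀ i j, j ≠ i → j ≠ σ i → H i j = 0) ∧
          (∀ i, σ i = i → H i i ≠ 0) ∧
          (∀ i, σ i ≠ i → ∃ k : ℤ,
            (H i i = 0 ∧ H i (σ i) = (2:ℚ_[2]) ^ k ∧ H (σ i) (σ i) = 0) ∨
            (H i i = 2 * (2:ℚ_[2]) ^ k ∧ H i (σ i) = (2:ℚ_[2]) ^ k ∧
              H (σ i) (σ i) = 2 * (2:ℚ_[2]) ^ k)) := by
  obtain ⟨M, hMn, hMd, σ, h1, h2, h3, h4⟩ := main_decomp n G hsymm hnd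
  set P : Matrix (Fin n) (Fin n) ℤ_[2] :=
    Matrix.of (fun i j => (⟨M i j, hMn i j⟩ : ℤ_[2])) with hP
  have hmap : P.map (fun a => (a : ℚ_[2])) = M := by
    ext i j; rfl
  refine ⟨P, ?_, Mᵀ * G * M, by rw [hmap], σ, h1, h2, h3, h4⟩
  rw [PadicInt.isUnit_iff]
  have hdet : ((P.det : ℤ_[2]) : ℚ_[2]) = M.det := by
    have h := RingHom.map_det (@PadicInt.Coe.ringHom 2 _) P
    rw [← hmap]
    exact h
  rw [PadicInt.norm_def, hdet, hMd]
end

section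
/- If M is a 1-dimensional unimodular ℤ₂-lattice with odd-norm generator and N is an even unimodular ℤ₂-lattice of rank 2, then the orthogonal direct sum M ⊕ N admits an orthogonal basis. -/
open scoped Matrix BigOperators

/-- The bilinear form on `ι → ℤ₂` given by a Gram matrix. -/
noncomputable def bf {ι : Type} [Fintype ι] (M : Matrix ι ι ℤ_[2]) (x y : ι → ℤ_[2]) : ℤ_[2] :=
  ∑ i, ∑ j, x i * M i j * y j

/-- In `ℤ₂`, a unit plus an even element is a unit. -/
lemma unit_add_even (u x : ℤ_[2]) (hu : IsUnit u) (hx : (2 : ℤ_[2]) ∣ x) :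
    IsUnit (u + x) := by
  by_contra h
  have h2 : (2 : ℤ_[2]) ∈ IsLocalRing.maximalIdeal ℤ_[2] := by
    rw [IsLocalRing.mem_maximalIdeal, mem_nonunits_iff, PadicInt.isUnit_iff]
    have : ‖(2 : ℤ_[2])‖ = (2 : ℝ)⁻¹ := by
      simpa using PadicInt.norm_p (p := 2)
    rw [this]; norm_num
  obtain ⟨k, rfl⟩ := hx
  have hxm : 2 * k ∈ IsLocalRing.maximalIdeal ℤ_[2] := Ideal.mul_mem_right _ _ h2
  have hm : u + 2 * k ∈ IsLocalRing.maximalIdeal ℤ_[2] :=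
    (IsLocalRing.mem_maximalIdeal _).mpr h
  have : u ∈ IsLocalRing.maximalIdeal ℤ_[2] := by
    have := Ideal.sub_mem _ hm hxm
    simpa using this
  exact ((IsLocalRing.mem_maximalIdeal _).mp this) hu

/-- The explicit equivalence `Fin 3 ≃ Fin 1 ⊕ Fin 2`. -/
def e3 : Fin 3 ≃ Fin 1 ⊕ Fin 2 where
  toFun := ![Sum.inl 0, Sum.inr 0, Sum.inr 1]
  invFun := Sum.elim ![0] ![1, 2]
  left_inv := by decide
  right_inv := by rintro (x | x) <;> fin_cases x <;> rfl

set_option maxHeartbeats 1000000 in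
/-- If `M` is a 1-dimensional unimodular ℤ₂-lattice with odd-norm generator (Gram matrix
`(a)` with `a` a unit) and `N` is an even unimodular ℤ₂-lattice of rank 2, then the
orthogonal direct sum `M ⊕ N` admits an orthogonal basis, i.e. its Gram matrix is
ℤ₂-congruent to a diagonal matrix. -/
theorem odd_plus_even_unimodular_has_orthogonal_basis (a : ℤ_[2]) (ha : IsUnit a)
    (N : Matrix (Fin 2) (Fin 2) ℤ_[2]) (hsymm : N.IsSymm) (hunimod : IsUnit N.det)
    (heven : ∀ x : Fin 2 → ℤ_[2], (2 : ℤ_[2]) ∣ bf N x x) :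
    ∃ P : Matrix (Fin 1 ⊕ Fin 2) (Fin 1 ⊕ Fin 2) ℤ_[2], IsUnit P.det ∧
      (Pᵀ * Matrix.fromBlocks !![a] 0 0 N * P).IsDiag := by
  -- notation
  set b : ℤ_[2] := N 0 1 with hbdef
  have hb : N 1 0 = b := hsymm.apply 0 1
  have h00 : (2 : ℤ_[2]) ∣ N 0 0 := by
    have := heven ![1, 0]
    simpa [bf, Fin.sum_univ_succ] using this
  have h11 : (2 : ℤ_[2]) ∣ N 1 1 := by
    have := heven ![0, 1]
    simpa [bf, Fin.sum_univ_succ] using this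
  set q : ℤ_[2] := a + N 0 0 with hqdef
  set c : ℤ_[2] := N.det + a * N 1 1 with hcdef
  have hq : IsUnit q := unit_add_even a _ ha h00
  have hc : IsUnit c := unit_add_even N.det _ hunimod (Dvd.dvd.mul_left h11 a)
  have hdet2 : N.det = N 0 0 * N 1 1 - b * b := by
    rw [Matrix.det_fin_two, hb]
  refine ⟨Matrix.fromBlocks !![1] !![-b, c * N 0 0 - a * b * b] !![1; 0]
      !![-b, -(a * c + a * b * b); q, a * b * q], ?_, ?_⟩
  · have hd : (Matrix.fromBlocks !![(1 : ℤ_[2])] !![-b, c * N 0 0 - a * b * b] !![1; 0]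
        !![-b, -(a * c + a * b * b); q, a * b * q]).det = c * q * q := by
      rw [← Matrix.det_submatrix_equiv_self e3]
      rw [Matrix.det_fin_three]
      simp [Matrix.submatrix_apply, e3, hdet2]
      ring
    rw [hd]
    exact (hc.mul hq).mul hq
  · intro i j hij
    have key : ∀ (x y : Fin 1 ⊕ Fin 2) (M₁ M₂ M₃ : Matrix (Fin 1 ⊕ Fin 2) (Fin 1 ⊕ Fin 2) ℤ_[2]),
        (M₁ * M₂ * M₃) x y = ∑ k : Fin 1 ⊕ Fin 2, ∑ l : Fin 1 ⊕ Fin 2,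
          M₁ x k * M₂ k l * M₃ l y := by
      intro x y M₁ M₂ M₃
      simp [Matrix.mul_apply, Finset.sum_mul, Finset.mul_sum, Fintype.sum_sum_type,
        Fin.sum_univ_succ]
      ring
    rcases i with i | i <;> rcases j with j | j <;> fin_cases i <;> fin_cases j <;>
      first
        | exact absurd rfl hij
        | (rw [key]
           simp [Fintype.sum_sum_type, Fin.sum_univ_succ, Matrix.fromBlocks, hb, hdet2,
             hcdef, hqdef]
           ring)
end

section
/- For any odd 2-adic integers t and t', the diagonal ℤ₂-lattices ⟨t, t'⟩ and ⟨t+4, t'+4⟩ are isometric. -/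
open scoped Matrix BigOperators

/-- Isometry of the ℤ₂-lattices presented by two Gram matrices. -/
def Isom {ι κ : Type} [Fintype ι] [Fintype κ]
    (M : Matrix ι ι ℤ_[2]) (N : Matrix κ κ ℤ_[2]) : Prop :=
  ∃ e : (ι → ℤ_[2]) ≃ₗ[ℤ_[2]] (κ → ℤ_[2]), ∀ x y, bf N (e x) (e y) = bf M x y

lemma unit_of_not_dvd {x : ℤ_[2]} (h : ¬ (2:ℤ_[2]) ∣ x) : IsUnit x := by
  rw [PadicInt.isUnit_iff]
  refine le_antisymm x.norm_le_one (not_lt.mp fun hlt => h ?_)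
  have := (PadicInt.norm_lt_one_iff_dvd x).mp hlt
  simpa using this

lemma two_dvd_mul_succ (x : ℤ_[2]) : (2:ℤ_[2]) ∣ x * (x + 1) := by
  have h : x * (x + 1) ∈ RingHom.ker (PadicInt.toZMod (p := 2)) := by
    rw [RingHom.mem_ker]
    have : ∀ y : ZMod 2, y * (y + 1) = 0 := by decide
    simpa using this (PadicInt.toZMod x)
  rw [PadicInt.ker_toZMod, PadicInt.maximalIdeal_eq_span_p, Ideal.mem_span_singleton] at h
  simpa using h

lemma prime_two : Prime (2:ℤ_[2]) := by
  have : Prime ((2:ℕ):ℤ_[2]) := PadicInt.prime_p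
  simpa using this

lemma dvd_succ_of_odd {x : ℤ_[2]} (h : ¬ (2:ℤ_[2]) ∣ x) : (2:ℤ_[2]) ∣ x + 1 :=
  ((prime_two.dvd_mul).mp (two_dvd_mul_succ x)).resolve_left h

lemma dvd_pred_of_odd {x : ℤ_[2]} (h : ¬ (2:ℤ_[2]) ∣ x) : (2:ℤ_[2]) ∣ x - 1 := by
  have := two_dvd_mul_succ (x - 1)
  simpa using ((prime_two.dvd_mul).mp (by simpa using this)).resolve_right h

lemma eight_dvd_sq_sub_one {x : ℤ_[2]} (h : ¬ (2:ℤ_[2]) ∣ x) : (8:ℤ_[2]) ∣ x * x - 1 := by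
  obtain ⟨k, hk⟩ := dvd_pred_of_odd h
  obtain ⟨m, hm⟩ := two_dvd_mul_succ k
  refine ⟨m, ?_⟩
  have hx : x = 2 * k + 1 := by linear_combination hk
  subst hx
  linear_combination 4 * hm

lemma exists_sqrt {u : ℤ_[2]} (h : (8:ℤ_[2]) ∣ 1 - u) : ∃ r : ℤ_[2], r * r = u := by
  have hnorm : ‖((Polynomial.X ^ 2 - Polynomial.C u : Polynomial ℤ_[2]).eval 1)‖ <
      ‖((Polynomial.X ^ 2 - Polynomial.C u : Polynomial ℤ_[2]).derivative.eval 1)‖ ^ 2 := by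
    have heval : (Polynomial.X ^ 2 - Polynomial.C u : Polynomial ℤ_[2]).eval 1 = 1 - u := by
      simp
    have hderiv : (Polynomial.X ^ 2 - Polynomial.C u : Polynomial ℤ_[2]).derivative.eval 1
        = 2 := by simp; norm_num
    rw [heval, hderiv]
    obtain ⟨c, hc⟩ := h
    have h2 : ‖(2:ℤ_[2])‖ = 2⁻¹ := by
      have := PadicInt.norm_p (p := 2)
      simpa using this
    have h8 : ‖(8:ℤ_[2])‖ = 8⁻¹ := by
      have : (8:ℤ_[2]) = 2 ^ 3 := by norm_num
      rw [this, norm_pow, h2]; norm_num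
    have hle : ‖(1:ℤ_[2]) - u‖ ≤ 8⁻¹ := by
      rw [hc, norm_mul, h8]
      calc (8:ℝ)⁻¹ * ‖c‖ ≤ 8⁻¹ * 1 := by
            exact mul_le_mul_of_nonneg_left c.norm_le_one (by norm_num)
        _ = 8⁻¹ := mul_one _
    calc ‖(1:ℤ_[2]) - u‖ ≤ 8⁻¹ := hle
      _ < 2⁻¹ ^ 2 := by norm_num
      _ = ‖(2:ℤ_[2])‖ ^ 2 := by rw [h2]
  obtain ⟨z, hz, -⟩ := hensels_lemma hnorm
  refine ⟨z, ?_⟩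
  have : z ^ 2 - u = 0 := by simpa using hz
  linear_combination this + sq z

/-- For odd 2-adic integers t, t', the diagonal lattices ⟨t,t'⟩ and ⟨t+4,t'+4⟩ are
isometric. -/
theorem diag_isometric_add_four (t t' : ℤ_[2]) (ht : ¬ (2:ℤ_[2]) ∣ t) (ht' : ¬ (2:ℤ_[2]) ∣ t') :
    Isom !![t, 0; 0, t'] !![t + 4, 0; 0, t' + 4] := by
  have htu : IsUnit t := unit_of_not_dvd ht
  have ht'u : IsUnit t' := unit_of_not_dvd ht'
  have ht4 : ¬ (2:ℤ_[2]) ∣ t + 4 := fun hd => ht (by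
    have : (2:ℤ_[2]) ∣ 4 := ⟨2, by norm_num⟩
    simpa using dvd_sub hd this)
  have ht'4 : ¬ (2:ℤ_[2]) ∣ t' + 4 := fun hd => ht' (by
    have : (2:ℤ_[2]) ∣ 4 := ⟨2, by norm_num⟩
    simpa using dvd_sub hd this)
  have ht4u : IsUnit (t + 4) := unit_of_not_dvd ht4
  have ht'4u : IsUnit (t' + 4) := unit_of_not_dvd ht'4
  obtain ⟨v, hv⟩ := ht4u.exists_right_inv
  obtain ⟨w, hw⟩ := (htu.mul (ht4u.mul ht'4u)).exists_right_inv
  -- first square root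
  obtain ⟨a, ha⟩ : ∃ a : ℤ_[2], a * a = (t - 4 * (t' + 4)) * v := by
    apply exists_sqrt
    obtain ⟨k, hk⟩ := dvd_succ_of_odd ht'
    exact ⟨(k + 2) * v, by linear_combination (-1 : ℤ_[2]) * hv + 4 * v * hk⟩
  have key1 : (t + 4) * (a * a) = t - 4 * (t' + 4) := by
    rw [ha]
    calc (t + 4) * ((t - 4 * (t' + 4)) * v) = (t - 4 * (t' + 4)) * ((t + 4) * v) := by ring
      _ = t - 4 * (t' + 4) := by rw [hv, mul_one]
  -- second square root
  obtain ⟨s, hs⟩ : ∃ s : ℤ_[2], s * s = t' * w := by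
    apply exists_sqrt
    obtain ⟨k1, hk1⟩ := eight_dvd_sq_sub_one ht
    obtain ⟨k2, hk2⟩ := dvd_succ_of_odd (fun hd =>
      ht ((prime_two.dvd_mul).mp hd |>.resolve_right ht'))
    exact ⟨(t' * k1 + 4 * k1 + k2 + 2 * t) * w,
      by linear_combination (-1 : ℤ_[2]) * hw + w * (t' + 4) * hk1 + 4 * w * hk2⟩
  have key2 : t * (t + 4) * (t' + 4) * (s * s) = t' := by
    rw [hs]
    calc t * (t + 4) * (t' + 4) * (t' * w) = t' * (t * ((t + 4) * (t' + 4)) * w) := by ring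
      _ = t' * 1 := by rw [hw]
      _ = t' := mul_one t'
  -- the change of basis matrix
  set A : Matrix (Fin 2) (Fin 2) ℤ_[2] := !![a, -(2 * (t' + 4) * s); 2, (t + 4) * a * s] with hA
  have hdet : A.det = s * t := by
    rw [hA, Matrix.det_fin_two_of]
    linear_combination s * key1
  have hsu : IsUnit s := by
    have : IsUnit (s * s) := by
      rw [hs]
      exact ht'u.mul (IsUnit.of_mul_eq_one (a := w) (t * (t + 4) * (t' + 4)) (by
        rw [← hw]; ring))
    exact isUnit_of_mul_isUnit_left this
  have hinv : Invertible A := A.invertibleOfIsUnitDet (hdet ▸ hsu.mul htu)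
  refine ⟨A.toLinearEquiv' hinv, fun x y => ?_⟩
  have happ : ∀ z : Fin 2 → ℤ_[2], (A.toLinearEquiv' hinv) z = A.mulVec z := fun z => rfl
  rw [happ, happ]
  simp only [bf, Fin.sum_univ_two, Matrix.mulVec, dotProduct, hA,
    Matrix.cons_val', Matrix.cons_val_zero, Matrix.cons_val_one, Matrix.head_cons,
    Matrix.empty_val', Matrix.cons_val_fin_one, Matrix.head_fin_const, Matrix.of_apply,
    Matrix.cons_val_fin_one]
  ring_nf
  linear_combination (x 0 * y 0 + (t' + 4) * (t + 4) * s^2 * (x 1 * y 1)) * key1 +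
    (x 1 * y 1) * key2
end

section
/- The ℤ₂-lattice ⟨-3, 1, 1, 1⟩ admits an orthogonal direct sum decomposition into a sublattice isometric to ⟨-3, 3⟩ and a sublattice isometric to the even lattice with Gram matrix [[2,1],[1,2]]. -/
open scoped Matrix

/-- The ℤ₂-lattice ⟨-3,1,1,1⟩ admits an orthogonal direct sum decomposition into a
sublattice isometric to ⟨-3,3⟩ and one isometric to the even lattice `[[2,1],[1,2]]`:
there is a ℤ₂-basis whose Gram matrix is the block diagonal sum of `[[-3,0],[0,3]]` and
`[[2,1],[1,2]]`. -/
theorem diag_neg_three_ones_decomposition :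
    ∃ P : Matrix (Fin 4) (Fin 4) ℤ_[2], IsUnit P.det ∧
      Pᵀ * Matrix.diagonal ![(-3:ℤ_[2]), 1, 1, 1] * P =
        !![(-3:ℤ_[2]), 0, 0, 0; 0, 3, 0, 0; 0, 0, 2, 1; 0, 0, 1, 2] := by
  refine ⟨!![1,0,0,0; 0,1,1,0; 0,1,-1,-1; 0,1,0,1], ?_, ?_⟩
  · have h : (!![(1:ℤ_[2]),0,0,0; 0,1,1,0; 0,1,-1,-1; 0,1,0,1]).det = -3 := by
      simp [Matrix.det_succ_row_zero, Fin.sum_univ_succ]; ring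
    rw [h]
    have h3 : ¬ ((2:ℤ) ∣ (-3)) := by decide
    have := (PadicInt.norm_int_lt_one_iff_dvd (p := 2) (-3)).not.mpr h3
    rw [PadicInt.isUnit_iff]
    have hle := PadicInt.norm_le_one ((-3 : ℤ) : ℤ_[2])
    push_cast at this hle ⊢
    exact le_antisymm hle (not_lt.mp this)
  · have hd : Matrix.diagonal ![(-3:ℤ_[2]), 1, 1, 1] =
        !![(-3:ℤ_[2]),0,0,0; 0,1,0,0; 0,0,1,0; 0,0,0,1] := by
      ext i j
      fin_cases i <;> fin_cases j <;>
        simp [Matrix.diagonal, Matrix.vecHead, Matrix.vecTail]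
    rw [hd]
    ext i j
    fin_cases i <;> fin_cases j <;>
      simp [Matrix.mul_apply, Fin.sum_univ_four, Matrix.vecHead, Matrix.vecTail,
        Matrix.transpose_apply] <;> ring
end

section
/- If x and x' are vectors of equal odd norm in an integral ℤ₂-lattice L with even inner product x·x', then the reflection in x − x' is an isometry of L exchanging x and x', hence x^⊥ ≅ x'^⊥. -/
open scoped Matrix

set_option maxHeartbeats 2000000 in
/-- If `x, x'` have equal odd norm in an integral ℤ₂-lattice `L` and `x·x'` is even,
then the reflection in `v = x - x'` is an isometry of `L` exchanging `x` and `x'`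
(characterized by `v² • r y = v² • y - (2 (y·v)) • v`, where `v²` is twice a unit),
hence `x^⊥ ≅ x'^⊥`. -/
theorem reflection_exchanges_and_perp_isometric (n : ℕ) (G : Matrix (Fin n) (Fin n) ℤ_[2])
    (hsymm : G.IsSymm) (x x' : Fin n → ℤ_[2])
    (hodd : ¬ (2 : ℤ_[2]) ∣ Matrix.toBilin' G x x)
    (heq : Matrix.toBilin' G x x = Matrix.toBilin' G x' x')
    (hev : (2 : ℤ_[2]) ∣ Matrix.toBilin' G x x') :
    (∃ r : (Fin n → ℤ_[2]) ≃ₗ[ℤ_[2]] (Fin n → ℤ_[2]),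
      (∀ y, Matrix.toBilin' G (x - x') (x - x') • r y =
          Matrix.toBilin' G (x - x') (x - x') • y -
            (2 * Matrix.toBilin' G y (x - x')) • (x - x')) ∧
      (∀ y z, Matrix.toBilin' G (r y) (r z) = Matrix.toBilin' G y z) ∧
      r x = x' ∧ r x' = x) ∧
    ∃ e : LinearMap.ker (Matrix.toBilin' G x) ≃ₗ[ℤ_[2]] LinearMap.ker (Matrix.toBilin' G x'),
      ∀ y z : LinearMap.ker (Matrix.toBilin' G x),
        Matrix.toBilin' G (e y : Fin n → ℤ_[2]) (e z : Fin n → ℤ_[2]) =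
          Matrix.toBilin' G (y : Fin n → ℤ_[2]) (z : Fin n → ℤ_[2]) := by
  set B := Matrix.toBilin' G with hB
  have hsym : ∀ a b, B a b = B b a := by
    intro a b
    simp only [hB, Matrix.toBilin'_apply']
    rw [Matrix.dotProduct_mulVec, ← Matrix.mulVec_transpose, hsymm.eq, dotProduct_comm]
  set v : Fin n → ℤ_[2] := x - x' with hv
  set u : ℤ_[2] := B x x - B x x' with hu
  have hBexp : ∀ a, B a v = B a x - B a x' := by
    intro a; simp [hv, map_sub]
  have hxv : B x v = u := by rw [hBexp]
  have hx'v : B x' v = -u := by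
    rw [hBexp, hsym x' x, ← heq, hu]; ring
  have hvv : B v v = 2 * u := by
    have h1 : B v v = B x x - B x' x - (B x x' - B x' x') := by
      simp [hv, map_sub]
    rw [h1, hsym x' x, ← heq, hu]; ring
  have huu : IsUnit u := by
    by_contra h
    rw [PadicInt.not_isUnit_iff] at h
    have : ((2 : ℕ) : ℤ_[2]) ∣ u := (PadicInt.norm_lt_one_iff_dvd u).mp h
    push_cast at this
    obtain ⟨c, hc⟩ := hev
    exact hodd ⟨c + (this.choose), by
      rw [mul_add, ← hc, ← this.choose_spec, hu]; ring⟩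
  set w : ℤ_[2] := ↑huu.unit⁻¹ with hw
  have hwu : w * u = 1 := by
    rw [hw]
    nth_rewrite 2 [← huu.unit_spec]
    exact huu.unit.inv_mul
  -- the reflection as a linear map
  set f : (Fin n → ℤ_[2]) →ₗ[ℤ_[2]] (Fin n → ℤ_[2]) :=
    { toFun := fun y => y - (w * B y v) • v
      map_add' := by
        intro a b
        simp only [map_add, LinearMap.add_apply, mul_add, add_smul]
        abel
      map_smul' := by
        intro c a
        simp only [map_smul, LinearMap.smul_apply, smul_eq_mul, RingHom.id_apply, smul_sub,
          smul_smul]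
        ring_nf } with hf
  have hfapp : ∀ y, f y = y - (w * B y v) • v := fun _ => rfl
  have hBfv : ∀ y, B (f y) v = - B y v := by
    intro y
    have h1 : B (f y) v = B y v - (w * B y v) * B v v := by
      simp [hfapp, map_sub, map_smul, LinearMap.sub_apply, LinearMap.smul_apply, smul_eq_mul]
    rw [h1, hvv]
    linear_combination (-2 * B y v) * hwu
  have hinv : Function.Involutive f := by
    intro y
    rw [hfapp (f y), hBfv, hfapp]
    simp only [mul_neg, neg_smul, sub_neg_eq_add]
    abel
  set r : (Fin n → ℤ_[2]) ≃ₗ[ℤ_[2]] (Fin n → ℤ_[2]) :=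
    { f with invFun := f, left_inv := hinv, right_inv := hinv } with hr
  have hrapp : ∀ y, r y = y - (w * B y v) • v := fun _ => rfl
  have hiso : ∀ y z, B (r y) (r z) = B y z := by
    intro y z
    rw [hrapp, hrapp]
    simp only [map_sub, map_smul, LinearMap.sub_apply, LinearMap.smul_apply, smul_eq_mul]
    rw [hvv, hsym v z]
    linear_combination (2 * w * B y v * B z v) * hwu
  have hrx : r x = x' := by
    rw [hrapp, hxv, hwu, one_smul, hv]; abel
  have hrx' : r x' = x := by
    rw [hrapp, hx'v, hv]
    have : w * -u = -1 := by rw [mul_neg, hwu]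
    rw [this, neg_smul, one_smul, sub_neg_eq_add]; abel
  refine ⟨⟨r, ?_, hiso, hrx, hrx'⟩, ?_⟩
  · intro y
    rw [hrapp, hvv, smul_sub, smul_smul]
    have : 2 * u * (w * B y v) = 2 * B y v := by
      calc 2 * u * (w * B y v) = 2 * B y v * (w * u) := by ring
      _ = 2 * B y v := by rw [hwu, mul_one]
    rw [this]
  -- the perp equivalence
  · have hker : ∀ y, B x (r y) = B x' y := by
      intro y
      conv_lhs => rw [← hrx', hiso]
    have hker' : ∀ y, B x' (r y) = B x y := by
      intro y
      conv_lhs => rw [← hrx, hiso]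
    have h1 : ∀ y ∈ LinearMap.ker (B x), r.toLinearMap y ∈ LinearMap.ker (B x') := by
      intro y hy
      rw [LinearMap.mem_ker] at hy ⊢
      rw [LinearEquiv.coe_coe, hker', hy]
    have h2 : ∀ y ∈ LinearMap.ker (B x'), r.toLinearMap y ∈ LinearMap.ker (B x) := by
      intro y hy
      rw [LinearMap.mem_ker] at hy ⊢
      rw [LinearEquiv.coe_coe, hker, hy]
    set F := (r.toLinearMap).restrict h1
    set Fi := (r.toLinearMap).restrict h2
    have hFF : ∀ z, Fi (F z) = z := by
      intro z
      apply Subtype.ext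
      rw [LinearMap.restrict_coe_apply, LinearMap.restrict_coe_apply]
      exact hinv _
    have hFF' : ∀ z, F (Fi z) = z := by
      intro z
      apply Subtype.ext
      rw [LinearMap.restrict_coe_apply, LinearMap.restrict_coe_apply]
      exact hinv _
    refine ⟨{ F with invFun := Fi, left_inv := hFF, right_inv := hFF' }, ?_⟩
    intro y z
    have : ∀ a : LinearMap.ker (B x),
        (({ F with invFun := Fi, left_inv := hFF, right_inv := hFF' } :
          LinearMap.ker (B x) ≃ₗ[ℤ_[2]] LinearMap.ker (B x')) a : Fin n → ℤ_[2]) = r a := by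
      intro a
      show (F a : Fin n → ℤ_[2]) = r a
      exact LinearMap.restrict_coe_apply _ _ _
    rw [this, this, hiso]
end
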